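/- Consider the fractional hedonic game induced by a star with center r and k = 6 leaves ℓ1,…,ℓ6, where r assigns value 1 to each leaf, each leaf assigns value 1 to r and 0 to every other leaf, and r’s value is 0 for itself. This game admits no popular partition. -/

import Mathlib

/-- A partition of the agent set `N` into coalitions: each agent `i` is assigned
the coalition `part i` containing her, and coalitions of members coincide. -/
structure HPartition (N : Type*) [Fintype N] [DecidableEq N] where
  part : N → Finset N
  mem_self : ∀ i, i ∈ part i
  eq_of_mem : ∀ i j, j ∈ part i → part j = part i

open Classical in
/-- Popularity margin `φ(π, π')`: number of agents strictly preferring `π`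
minus the number strictly preferring `π'`. -/
noncomputable def margin {N : Type*} [Fintype N] [DecidableEq N]
    (u : N → Finset N → ℝ) (π π' : HPartition N) : ℤ :=
  ((Finset.univ.filter fun i : N => u i (π'.part i) < u i (π.part i)).card : ℤ) -
  ((Finset.univ.filter fun i : N => u i (π.part i) < u i (π'.part i)).card : ℤ)

/-- A partition is popular if it never loses a pairwise vote. -/
def Popular {N : Type*} [Fintype N] [DecidableEq N]
    (u : N → Finset N → ℝ) (π : HPartition N) : Prop :=
  ∀ π' : HPartition N, 0 ≤ margin u π π'

/-- Fractional hedonic game utility of agent `i` in coalition `S`. -/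
noncomputable def fhgU {N : Type*} [DecidableEq N] (v : N → N → ℝ) (i : N) (S : Finset N) : ℝ :=
  (∑ j ∈ S.erase i, v i j) / (S.card : ℝ)

/-- Star valuations on 7 agents: agent 0 is the center `r`, agents 1..6 are leaves. -/
noncomputable def starV7 : Fin 7 → Fin 7 → ℝ := fun i j =>
  if i = 0 ∧ j ≠ 0 then 1 else if i ≠ 0 ∧ j = 0 then 1 else 0

open Finset

lemma u_center (T : Finset (Fin 7)) (h : (0:Fin 7) ∈ T) :
    fhgU starV7 0 T = ((T.card : ℝ) - 1) / T.card := by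
  have h1 : 1 ≤ T.card := card_pos.mpr ⟨0, h⟩
  unfold fhgU
  have hs : ∑ j ∈ T.erase 0, starV7 0 j = ((T.erase 0).card : ℝ) := by
    rw [Finset.sum_congr rfl (fun j hj => show starV7 0 j = 1 by
      simp [starV7, Finset.ne_of_mem_erase hj])]
    simp
  rw [hs, card_erase_of_mem h, Nat.cast_sub h1, Nat.cast_one]

lemma u_leaf (i : Fin 7) (hi : i ≠ 0) (T : Finset (Fin 7)) (h0 : (0:Fin 7) ∈ T) :
    fhgU starV7 i T = 1 / T.card := by
  unfold fhgU
  have hv : ∀ j, starV7 i j = if j = 0 then 1 else 0 := by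
    intro j; by_cases h : j = 0 <;> simp [starV7, hi, h]
  simp_rw [hv]
  rw [Finset.sum_ite_eq' (T.erase i) 0 (fun _ => (1:ℝ))]
  simp [Finset.mem_erase, h0, Ne.symm hi]

lemma u_nocenter (i : Fin 7) (T : Finset (Fin 7)) (h0 : (0:Fin 7) ∉ T)
    (hiT : i ∈ T) : fhgU starV7 i T = 0 := by
  have hi : i ≠ 0 := fun h => h0 (h ▸ hiT)
  unfold fhgU
  rw [Finset.sum_eq_zero, zero_div]
  intro j hj
  have hj0 : j ≠ 0 := fun h => h0 (h ▸ Finset.mem_of_mem_erase hj)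
  simp [starV7, hi, hj0]

lemma u_singleton (i : Fin 7) : fhgU starV7 i {i} = 0 := by simp [fhgU]

set_option maxHeartbeats 1000000 in
/-- The FHG induced by a star with six leaves admits no popular partition. -/
theorem fhg_star6_no_popular_partition :
    ¬ ∃ π : HPartition (Fin 7), Popular (fhgU starV7) π := by
  rintro ⟨π, hpop⟩
  set S : Finset (Fin 7) := π.part 0 with hS
  have h0S : (0:Fin 7) ∈ S := π.mem_self 0
  have hpart : ∀ i : Fin 7, i ∈ S → π.part i = S := fun i hi => π.eq_of_mem 0 i hi
  have hout : ∀ i : Fin 7, i ∉ S → fhgU starV7 i (π.part i) = 0 := by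
    intro i hi
    refine u_nocenter i (π.part i) ?_ (π.mem_self i)
    intro h0
    exact hi (by rw [hS, π.eq_of_mem i 0 h0]; exact π.mem_self i)
  set n : ℕ := S.card with hn
  have hn1 : 1 ≤ n := card_pos.mpr ⟨0, h0S⟩
  have hn7 : n ≤ 7 := by
    have := card_le_univ S
    simpa using this
  have hnR : (1:ℝ) ≤ (n:ℝ) := by exact_mod_cast hn1
  by_cases hle : n ≤ 4
  · -- deviate to the grand coalition
    set π' : HPartition (Fin 7) :=
      ⟨fun _ => univ, fun i => mem_univ i, fun _ _ _ => rfl⟩ with hπ'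
    have h := hpop π'
    have hcard : (univ : Finset (Fin 7)).card = 7 := by simp
    have hn4R : (n:ℝ) ≤ 4 := by exact_mod_cast hle
    have hA : (Finset.univ.filter fun i : Fin 7 =>
        fhgU starV7 i (π'.part i) < fhgU starV7 i (π.part i)) = S.erase 0 := by
      ext i
      simp only [mem_filter, mem_univ, true_and, mem_erase]
      show fhgU starV7 i univ < fhgU starV7 i (π.part i) ↔ i ≠ 0 ∧ i ∈ S
      by_cases hi0 : i = 0
      · subst hi0
        rw [u_center univ (mem_univ 0), u_center S h0S, hcard, ← hn]
        constructor
        · intro hlt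
          exfalso
          rw [div_lt_div_iff₀ (by push_cast; norm_num) (by linarith)] at hlt
          push_cast at hlt
          nlinarith
        · rintro ⟨h, -⟩; exact absurd rfl h
      · by_cases hiS : i ∈ S
        · rw [u_leaf i hi0 univ (mem_univ 0), hpart i hiS, u_leaf i hi0 S h0S, hcard, ← hn]
          constructor
          · intro _; exact ⟨hi0, hiS⟩
          · intro _
            rw [div_lt_div_iff₀ (by push_cast; norm_num) (by linarith)]
            push_cast
            nlinarith
        · rw [u_leaf i hi0 univ (mem_univ 0), hout i hiS, hcard]
          constructor
          · intro hlt; exfalso; push_cast at hlt; norm_num at hlt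
          · rintro ⟨-, h⟩; exact absurd h hiS
    have hB : (Finset.univ.filter fun i : Fin 7 =>
        fhgU starV7 i (π.part i) < fhgU starV7 i (π'.part i)) = (S.erase 0)ᶜ := by
      ext i
      simp only [mem_filter, mem_univ, true_and, mem_compl, mem_erase, not_and]
      show fhgU starV7 i (π.part i) < fhgU starV7 i univ ↔ (i ≠ 0 → i ∉ S)
      by_cases hi0 : i = 0
      · subst hi0
        rw [u_center univ (mem_univ 0), u_center S h0S, hcard, ← hn]
        constructor
        · intro _ h; exact absurd rfl h
        · intro _
          rw [div_lt_div_iff₀ (by linarith) (by push_cast; norm_num)]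
          push_cast
          nlinarith
      · by_cases hiS : i ∈ S
        · rw [hpart i hiS, u_leaf i hi0 S h0S, u_leaf i hi0 univ (mem_univ 0), hcard, ← hn]
          constructor
          · intro hlt
            exfalso
            rw [div_lt_div_iff₀ (by linarith) (by push_cast; norm_num)] at hlt
            push_cast at hlt
            nlinarith
          · intro hcon; exact absurd hiS (hcon hi0)
        · rw [u_leaf i hi0 univ (mem_univ 0), hout i hiS, hcard]
          constructor
          · intro _ _; exact hiS
          · intro _
            rw [lt_div_iff₀ (by push_cast; norm_num)]
            norm_num
    rw [margin, hA, hB] at h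
    have hc1 : (S.erase 0).card = n - 1 := by rw [card_erase_of_mem h0S]
    have hc2 : ((S.erase 0)ᶜ).card = 7 - (n - 1) := by
      rw [card_compl, hc1]; simp
    rw [hc1, hc2] at h
    omega
  · -- n ≥ 5 : deviate to S minus one leaf
    push_neg at hle
    have hen : (S.erase 0).Nonempty := by
      rw [← card_pos, card_erase_of_mem h0S]; omega
    obtain ⟨a, ha⟩ := hen
    rw [mem_erase] at ha
    obtain ⟨ha0, haS⟩ := ha
    set T : Finset (Fin 7) := S.erase a with hT
    have h0T : (0:Fin 7) ∈ T := mem_erase.mpr ⟨Ne.symm ha0, h0S⟩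
    have haT : a ∉ T := notMem_erase a S
    have hTcard : T.card = n - 1 := card_erase_of_mem haS
    set π' : HPartition (Fin 7) :=
      ⟨fun i => if i ∈ T then T else {i},
       fun i => by by_cases h : i ∈ T <;> simp [h],
       fun i j hj => by
         by_cases h : i ∈ T
         · simp only [h, if_true] at hj; simp [hj, h]
         · simp only [h, if_false, mem_singleton] at hj; subst hj; rfl⟩ with hπ'
    have h := hpop π'
    have hnR5 : (5:ℝ) ≤ (n:ℝ) := by exact_mod_cast hle
    have hTR : ((T.card : ℕ) : ℝ) = (n:ℝ) - 1 := by
      rw [hTcard, Nat.cast_sub hn1]; norm_num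
    have hA : (Finset.univ.filter fun i : Fin 7 =>
        fhgU starV7 i (π'.part i) < fhgU starV7 i (π.part i)) = {0, a} := by
      ext i
      simp only [mem_filter, mem_univ, true_and, mem_insert, mem_singleton]
      show fhgU starV7 i (if i ∈ T then T else {i}) < fhgU starV7 i (π.part i)
        ↔ i = 0 ∨ i = a
      by_cases hi0 : i = 0
      · subst hi0
        rw [if_pos h0T, u_center T h0T, u_center S h0S, hTR, ← hn]
        constructor
        · intro _; left; rfl
        · intro _
          rw [div_lt_div_iff₀ (by linarith) (by linarith)]
          nlinarith
      · by_cases hia : i = a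
        · rw [hia, if_neg haT, u_singleton, hpart a haS, u_leaf a ha0 S h0S, ← hn]
          constructor
          · intro _; right; rfl
          · intro _; exact div_pos one_pos (by linarith)
        · by_cases hiT : i ∈ T
          · have hiS : i ∈ S := mem_of_mem_erase hiT
            rw [if_pos hiT, u_leaf i hi0 T h0T, hpart i hiS, u_leaf i hi0 S h0S, hTR, ← hn]
            constructor
            · intro hlt
              exfalso
              rw [div_lt_div_iff₀ (by linarith) (by linarith)] at hlt
              nlinarith
            · rintro (h | h)
              · exact absurd h hi0
              · exact absurd h hia
          · have hiS : i ∉ S := fun hiS => hiT (mem_erase.mpr ⟨hia, hiS⟩)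
            rw [if_neg hiT, u_singleton, hout i hiS]
            constructor
            · intro hlt; exact absurd hlt (lt_irrefl 0)
            · rintro (h | h)
              · exact absurd h hi0
              · exact absurd h hia
    have hB : (Finset.univ.filter fun i : Fin 7 =>
        fhgU starV7 i (π.part i) < fhgU starV7 i (π'.part i)) = T.erase 0 := by
      ext i
      simp only [mem_filter, mem_univ, true_and, mem_erase]
      show fhgU starV7 i (π.part i) < fhgU starV7 i (if i ∈ T then T else {i})
        ↔ i ≠ 0 ∧ i ∈ T
      by_cases hi0 : i = 0
      · subst hi0
        rw [if_pos h0T, u_center T h0T, u_center S h0S, hTR, ← hn]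
        constructor
        · intro hlt
          exfalso
          rw [div_lt_div_iff₀ (by linarith) (by linarith)] at hlt
          nlinarith
        · rintro ⟨h, -⟩; exact absurd rfl h
      · by_cases hia : i = a
        · rw [hia, if_neg haT, u_singleton, hpart a haS, u_leaf a ha0 S h0S, ← hn]
          constructor
          · intro hlt
            exfalso
            have : (0:ℝ) < 1/(n:ℝ) := by positivity
            linarith
          · rintro ⟨-, h⟩; exact absurd h haT
        · by_cases hiT : i ∈ T
          · have hiS : i ∈ S := mem_of_mem_erase hiT
            rw [if_pos hiT, u_leaf i hi0 T h0T, hpart i hiS, u_leaf i hi0 S h0S, hTR, ← hn]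
            constructor
            · intro _; exact ⟨hi0, hiT⟩
            · intro _
              rw [div_lt_div_iff₀ (by linarith) (by linarith)]
              nlinarith
          · have hiS : i ∉ S := fun hiS => hiT (mem_erase.mpr ⟨hia, hiS⟩)
            rw [if_neg hiT, u_singleton, hout i hiS]
            constructor
            · intro hlt; exact absurd hlt (lt_irrefl 0)
            · rintro ⟨-, h⟩; exact absurd h hiT
    rw [margin, hA, hB] at h
    have hc1 : ({0, a} : Finset (Fin 7)).card = 2 := by
      rw [card_insert_of_notMem (by simp [Ne.symm ha0]), card_singleton]
    have hc2 : (T.erase 0).card = n - 2 := by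
      rw [card_erase_of_mem h0T, hTcard]; omega
    rw [hc1, hc2] at h
    omega
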